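/- arXiv:1308.5618 — 2 statements merged into one kernel-verified Lean document; each statement's English description precedes it below -/
import Mathlib

section
/- Let A be an alphabet with exactly three letters and let F be a uniformly recurrent tree set over A with A ⊆ F. Let x ∈ F be a bispecial word of length n, and assume the Rauzy graph G_n of F is of the first infinite type with respect to x and a second special vertex y and words u, v, w, t. Set X = { x v wᵏ : k ≥ 0 }. Let m ≥ 0 be such that z = y wᵐ ∈ F. Then U = Xy⁻¹ ∩ Fz⁻¹ is an Fz⁻¹-maximal suffix code, where Xy⁻¹ = {s ∈ A* : sy ∈ X} and Fz⁻¹ = {s ∈ A* : sz ∈ F}. -/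
open List

variable {A : Type*}

/-- The `n`-th power `wⁿ` of a word (concatenation). -/
def wordPow (w : List A) (n : ℕ) : List A := (List.replicate n w).flatten

/-- A set of words is factorial if it contains the factors of its elements. -/
def Factorial (F : Set (List A)) : Prop := ∀ ⦃u v : List A⦄, u ∈ F → v <:+: u → v ∈ F

/-- A set of words is recurrent if it is factorial and any two of its words
occur in a common word of the set, in a prescribed order. -/
def Recurrent (F : Set (List A)) : Prop :=
  Factorial F ∧ ∀ u ∈ F, ∀ w ∈ F, ∃ v : List A, u ++ v ++ w ∈ F

/-- A set of words is uniformly recurrent if it is factorial, right-essential, and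
every word of the set occurs in all long enough words of the set. -/
def UniformlyRecurrent (F : Set (List A)) : Prop :=
  Factorial F ∧ (∀ w ∈ F, ∃ a : A, w ++ [a] ∈ F) ∧
    ∀ u ∈ F, ∃ n ≥ 1, ∀ w ∈ F, w.length = n → u <:+: w

/-- A set of words is periodic if it is the set of factors of the powers of a single word. -/
def Periodic (F : Set (List A)) : Prop :=
  ∃ w : List A, F = {v | ∃ n : ℕ, v <:+: wordPow w n}

/-- `L(w)`, the set of left extensions of `w` in `F`. -/
def LeftExt (F : Set (List A)) (w : List A) : Set A := {a | a :: w ∈ F}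

/-- `R(w)`, the set of right extensions of `w` in `F`. -/
def RightExt (F : Set (List A)) (w : List A) : Set A := {a | w ++ [a] ∈ F}

/-- A word is left-special if it has at least two left extensions. -/
def LeftSpecial (F : Set (List A)) (w : List A) : Prop := 2 ≤ (LeftExt F w).ncard

/-- A word is right-special if it has at least two right extensions. -/
def RightSpecial (F : Set (List A)) (w : List A) : Prop := 2 ≤ (RightExt F w).ncard

/-- A word is bispecial if it is both left-special and right-special. -/
def Bispecial (F : Set (List A)) (w : List A) : Prop := LeftSpecial F w ∧ RightSpecial F w

/-- A set of words is biessential if it is factorial and every one of its words is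
biextendable. -/
def Biessential (F : Set (List A)) : Prop :=
  Factorial F ∧ ∀ w ∈ F, ∃ a b : A, a :: (w ++ [b]) ∈ F

/-- The bipartite (simple, undirected) graph on `α ⊕ β` induced by a relation
`E : α → β → Prop`. -/
def bipGraph {α β : Type*} (E : α → β → Prop) : SimpleGraph (α ⊕ β) where
  Adj x y := ∃ a b, E a b ∧ ((x = Sum.inl a ∧ y = Sum.inr b) ∨ (x = Sum.inr b ∧ y = Sum.inl a))
  symm := by
    constructor
    rintro x y ⟨a, b, h, hc⟩
    exact ⟨a, b, h, by tauto⟩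
  loopless := by
    constructor
    rintro x ⟨a, b, h, hc⟩
    rcases hc with ⟨h1, h2⟩ | ⟨h1, h2⟩ <;> simp_all

/-- The extension graph `G(w)` of a word `w`: the bipartite graph on
`L(w) ⊔ R(w)` with an edge between `a` and `b` iff `awb ∈ F`. -/
def extensionGraph (F : Set (List A)) (w : List A) :
    SimpleGraph ({a : A // a ∈ LeftExt F w} ⊕ {b : A // b ∈ RightExt F w}) :=
  bipGraph (fun a b => a.1 :: (w ++ [b.1]) ∈ F)

/-- A tree set: a biessential set all of whose extension graphs are trees. -/
def IsTreeSet (F : Set (List A)) : Prop :=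
  Biessential F ∧ ∀ w ∈ F, (extensionGraph F w).IsTree

/-- The generalized extension graph `G_{U,V}(w)`: the bipartite graph on
`U(w) ⊔ V(w)` with an edge between `ℓ` and `r` iff `ℓwr ∈ F`. -/
def genExtGraph (F : Set (List A)) (U V : Set (List A)) (w : List A) :
    SimpleGraph ({l : List A // l ∈ U ∧ l ++ w ∈ F} ⊕ {r : List A // r ∈ V ∧ w ++ r ∈ F}) :=
  bipGraph (fun l r => l.1 ++ w ++ r.1 ∈ F)

/-- A prefix code: a set of nonempty words none of which is a proper prefix of another. -/
def IsPrefixCode (U : Set (List A)) : Prop :=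
  (∀ u ∈ U, u ≠ []) ∧ ∀ u ∈ U, ∀ v ∈ U, u <+: v → u = v

/-- A suffix code: a set of nonempty words none of which is a proper suffix of another. -/
def IsSuffixCode (U : Set (List A)) : Prop :=
  (∀ u ∈ U, u ≠ []) ∧ ∀ u ∈ U, ∀ v ∈ U, u <:+ v → u = v

/-- An `S`-maximal prefix code: a prefix code contained in `S` and not properly contained
in any prefix code contained in `S`. -/
def IsMaximalPrefixCodeIn (S U : Set (List A)) : Prop :=
  IsPrefixCode U ∧ U ⊆ S ∧ ∀ W, IsPrefixCode W → W ⊆ S → U ⊆ W → U = W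

/-- An `S`-maximal suffix code. -/
def IsMaximalSuffixCodeIn (S U : Set (List A)) : Prop :=
  IsSuffixCode U ∧ U ⊆ S ∧ ∀ W, IsSuffixCode W → W ⊆ S → U ⊆ W → U = W

/-- `Γ_F(x)`, the set of right return words to `x` in `F`. -/
def ReturnWords (F : Set (List A)) (x : List A) : Set (List A) :=
  {r | r ≠ [] ∧ x ++ r ∈ F ∧ ∃ s : List A, s ≠ [] ∧ x ++ r = s ++ x}

/-- `R_F(x) = Γ_F(x) \ Γ_F(x)A⁺`, the set of first right return words to `x` in `F`. -/
def FirstReturnWords (F : Set (List A)) (x : List A) : Set (List A) :=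
  ReturnWords F x \ {r | ∃ r' ∈ ReturnWords F x, ∃ s : List A, s ≠ [] ∧ r = r' ++ s}

/-- The natural map from words to the free group. -/
def wordToFree (w : List A) : FreeGroup A := (w.map FreeGroup.of).prod

/-- `x` is unioccurrent in `y` if `x` occurs exactly once in `y`. -/
def Unioccurrent (x y : List A) : Prop := ∃! p : List A × List A, y = p.1 ++ x ++ p.2

/-- Vertices of the Rauzy graph `G_n`: words of `F` of length `n`. -/
def RauzyVertex (F : Set (List A)) (n : ℕ) := {w : List A // w ∈ F ∧ w.length = n}

/-- Edges of the Rauzy graph `G_n`: an edge from `x` to `y` labeled `a` whenever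
`xa ∈ F ∩ Ay`. -/
def RauzyEdge (F : Set (List A)) (n : ℕ) (x : RauzyVertex F n) (a : A)
    (y : RauzyVertex F n) : Prop :=
  x.1 ++ [a] ∈ F ∧ ∃ b : A, x.1 ++ [a] = b :: y.1

/-- `GenPathLabel E p q g` holds when there is a generalized path (a path which may
traverse edges forwards or backwards) from `p` to `q` in the `A`-labeled graph with
edge relation `E`, whose label (product of contributions in the free group) is `g`. -/
inductive GenPathLabel {V : Type*} (E : V → A → V → Prop) : V → V → FreeGroup A → Prop
  | nil (v : V) : GenPathLabel E v v 1
  | fwd {p q r : V} {g : FreeGroup A} {a : A} :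
      GenPathLabel E p q g → E q a r → GenPathLabel E p r (g * FreeGroup.of a)
  | bwd {p q r : V} {g : FreeGroup A} {a : A} :
      GenPathLabel E p q g → E r a q → GenPathLabel E p r (g * (FreeGroup.of a)⁻¹)

/-- A vertex of a Rauzy graph is special if the corresponding word is left-special
or right-special. -/
def SpecialWord (F : Set (List A)) (w : List A) : Prop := LeftSpecial F w ∨ RightSpecial F w

/-- Nonempty directed paths in the Rauzy graph `G_n` all of whose intermediate
vertices are non-special, together with their labels. -/
inductive NSPath (F : Set (List A)) (n : ℕ) : RauzyVertex F n → RauzyVertex F n → List A → Prop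
  | single {p q : RauzyVertex F n} {a : A} : RauzyEdge F n p a q → NSPath F n p q [a]
  | cons {p q r : RauzyVertex F n} {a : A} {l : List A} :
      RauzyEdge F n p a q → ¬ SpecialWord F q.1 → NSPath F n q r l → NSPath F n p r (a :: l)

/-- The Rauzy graph `G_n` is of the first infinite type with respect to the special
vertices `x, y` and the words `u, v, w, t`: `x` and `y` are the only special vertices and
the simple directed paths between them with non-special intermediate vertices are exactly
`x → x` labeled `u`, `x → y` labeled `v`, `y → y` labeled `w` and `y → x` labeled `t`. -/
def FirstInfiniteType (F : Set (List A)) (n : ℕ) (x y : RauzyVertex F n)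
    (u v w t : List A) : Prop :=
  x ≠ y ∧ SpecialWord F x.1 ∧ SpecialWord F y.1 ∧
    (∀ z : RauzyVertex F n, SpecialWord F z.1 → z = x ∨ z = y) ∧
    (∀ p q : RauzyVertex F n, (p = x ∨ p = y) → (q = x ∨ q = y) → ∀ l : List A,
      (NSPath F n p q l ↔ ((p = x ∧ q = x ∧ l = u) ∨ (p = x ∧ q = y ∧ l = v) ∨
        (p = y ∧ q = y ∧ l = w) ∨ (p = y ∧ q = x ∧ l = t))))

section Aux

open List

variable {A : Type*}

lemma wordPow_zero (w : List A) : wordPow w 0 = [] := rfl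

lemma wordPow_succ (w : List A) (c : ℕ) : wordPow w (c+1) = w ++ wordPow w c := by
  simp [wordPow, List.replicate_succ]

lemma wordPow_add (w : List A) (a b : ℕ) : wordPow w (a+b) = wordPow w a ++ wordPow w b := by
  induction a with
  | zero => simp [wordPow_zero]
  | succ a ih => rw [Nat.succ_add, wordPow_succ, wordPow_succ, ih, List.append_assoc]

lemma length_wordPow (w : List A) (c : ℕ) : (wordPow w c).length = c * w.length := by
  induction c with
  | zero => simp [wordPow_zero]
  | succ c ih => rw [wordPow_succ]; simp [ih, Nat.succ_mul]; ring

lemma wordPow_suffix (w : List A) {a b : ℕ} (h : a ≤ b) : wordPow w a <:+ wordPow w b :=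
  ⟨wordPow w (b-a), by rw [← wordPow_add, Nat.sub_add_cancel h]⟩

lemma suffix_of_suffix_len_le {l1 l2 l3 : List A} (h1 : l1 <:+ l3) (h2 : l2 <:+ l3)
    (h : l1.length ≤ l2.length) : l1 <:+ l2 := by
  rcases List.suffix_or_suffix_of_suffix h1 h2 with h' | h'
  · exact h'
  · rw [h'.eq_of_length (le_antisymm h'.length_le h)]

lemma suffix_append_split {W a b : List A} (h : W <:+ a ++ b) (hlen : b.length ≤ W.length) :
    ∃ e, e <:+ a ∧ W = e ++ b := by
  obtain ⟨t, ht⟩ := h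
  have hlen2 : t.length + W.length = a.length + b.length := by
    have := congrArg List.length ht; simpa using this
  have hta : t.length ≤ a.length := by omega
  have h1 : W = (a ++ b).drop t.length := by rw [← ht, List.drop_left]
  refine ⟨a.drop t.length, List.drop_suffix _ _, ?_⟩
  rw [h1, List.drop_append, Nat.sub_eq_zero_of_le hta, List.drop_zero]

lemma suffix_append_right {l1 l2 l3 : List A} (h : l1 <:+ l2) : l1 ++ l3 <:+ l2 ++ l3 := by
  obtain ⟨t, ht⟩ := h
  exact ⟨t, by rw [← ht, List.append_assoc]⟩

lemma left_det [Fintype A] {F : Set (List A)} {p : List A} (h : ¬ SpecialWord F p) {a b : A}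
    (ha : a :: p ∈ F) (hb : b :: p ∈ F) : a = b := by
  by_contra hne
  refine h (Or.inl ?_)
  have h2 : ({a, b} : Set A) ⊆ LeftExt F p := by
    intro c hc
    rcases hc with rfl | hc
    · exact ha
    · rcases hc with rfl; exact hb
  calc 2 = ({a,b} : Set A).ncard := (Set.ncard_pair hne).symm
  _ ≤ _ := Set.ncard_le_ncard h2 (Set.toFinite _)

end Aux
section NSAux

open List

variable {A : Type*} {F : Set (List A)} {n : ℕ}

lemma NSPath.label_ne_nil {p q : RauzyVertex F n} {l : List A}
    (h : NSPath F n p q l) : l ≠ [] := by cases h <;> simp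

lemma NSPath.decomp {p q : RauzyVertex F n} {l : List A}
    (h : NSPath F n p q l) : ∃ l₀ : List A, l₀.length = l.length ∧ p.1 ++ l = l₀ ++ q.1 := by
  induction h with
  | @single p q a e =>
    obtain ⟨hF, b, hb⟩ := e
    exact ⟨[b], rfl, by simpa using hb⟩
  | @cons p q r a l e hns hp ih =>
    obtain ⟨hF, b, hb⟩ := e
    obtain ⟨l₀, hl₀, hpl⟩ := ih
    refine ⟨b :: l₀, by simp [hl₀], ?_⟩
    calc p.1 ++ a :: l = (p.1 ++ [a]) ++ l := by simp
    _ = (b :: q.1) ++ l := by rw [hb]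
    _ = (b :: l₀) ++ r.1 := by simp [hpl]

lemma NSPath.mid (hn : 1 ≤ n) {p q : RauzyVertex F n} {l : List A}
    (h : NSPath F n p q l) : ∀ g c e, e ≠ [] → p.1 ++ l = (g ++ [c]) ++ (e ++ q.1) →
      ¬SpecialWord F ((e ++ q.1).take n) ∧ (c :: (e ++ q.1)).take (n+1) ∈ F := by
  induction h with
  | @single p q a e =>
    intro g c e' he' heq
    exfalso
    have h1 := congrArg List.length heq
    have h2 := p.2.2
    have h3 := q.2.2
    have h4 : 0 < e'.length := List.length_pos_iff.mpr he'
    simp at h1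
    omega
  | @cons p q r a l e hns hp ih =>
    intro g c e' he' heq
    obtain ⟨hFe, b, hb⟩ := e
    have hp1 : p.1 ≠ [] := by
      intro h0
      have h2 := p.2.2
      rw [h0] at h2
      simp at h2
      omega
    obtain ⟨hd, tl, hptl⟩ := List.exists_cons_of_ne_nil hp1
    have hbq : b = hd ∧ q.1 = tl ++ [a] := by
      rw [hptl] at hb
      simp at hb
      exact ⟨hb.1.symm, hb.2.symm⟩
    have hql : q.1 ++ l = tl ++ (a :: l) := by
      rw [hbq.2]; simp
    cases g with
    | nil =>
      rw [hptl] at heq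
      simp at heq
      obtain ⟨hc, heq2⟩ := heq
      have hmain : e' ++ r.1 = q.1 ++ l := by rw [hql, ← heq2]
      constructor
      · rw [hmain, List.take_left' q.2.2]
        exact hns
      · rw [hmain, ← hc]
        have h6 : (hd :: (q.1 ++ l)).take (n+1) = hd :: q.1 := by
          have h5 : hd :: (q.1 ++ l) = (hd :: q.1) ++ l := by simp
          rw [h5, List.take_left' (by simp [q.2.2])]
        rw [h6]
        have h7 : hd :: q.1 = p.1 ++ [a] := by rw [hb, hbq.1]
        rw [h7]
        exact hFe
    | cons c2 g2 =>
      rw [hptl] at heq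
      simp at heq
      obtain ⟨hc2, heq2⟩ := heq
      refine ih g2 c e' he' ?_
      rw [hql, heq2]
      simp

end NSAux
section NSC

open List

variable {A : Type*} {F : Set (List A)} {n : ℕ}

lemma nsc (hfac : Factorial F) :
    ∀ T : List A, T ∈ F → n + 1 ≤ T.length →
    (∀ i, 0 < i → i + n < T.length → ¬ SpecialWord F ((T.drop i).take n)) →
    ∀ p q : RauzyVertex F n, p.1 = T.take n → q.1 = T.drop (T.length - n) →
    NSPath F n p q (T.drop n) := by
  intro T
  induction T with
  | nil => intro _ h; simp at h
  | cons hd T' ih =>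
    intro hTF hTlen hint p q hp hq
    rcases Nat.lt_or_ge (n+1) (hd :: T').length with hlt | hge
    · -- step case : length ≥ n + 2
      have hT'len : n + 1 ≤ T'.length := by
        simp at hlt; omega
      have hT'F : T' ∈ F := hfac hTF (List.suffix_cons hd T').isInfix
      have hq1mem : T'.take n ∈ F := hfac hT'F (T'.take_prefix n).isInfix
      have hnlt : n < (hd :: T').length := by simp; omega
      set q1 : RauzyVertex F n := ⟨T'.take n, hq1mem, by simp; omega⟩ with hq1
      have hedge : RauzyEdge F n p ((hd :: T')[n]'hnlt) q1 := by
        constructor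
        · have h1 : p.1 ++ [(hd :: T')[n]'hnlt] = (hd :: T').take (n+1) := by
            rw [hp]
            simpa using List.take_concat_get _ _ _
          rw [h1]
          exact hfac hTF ((hd :: T').take_prefix (n+1)).isInfix
        · refine ⟨hd, ?_⟩
          have h1 : p.1 ++ [(hd :: T')[n]'hnlt] = (hd :: T').take (n+1) := by
            rw [hp]; simpa using List.take_concat_get _ _ _
          rw [h1]
          simp [hq1]
      have hns : ¬ SpecialWord F q1.1 := by
        have := hint 1 (by omega) (by simp; omega)
        simpa using this
      have htail : NSPath F n q1 q (T'.drop n) := by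
        refine ih hT'F hT'len ?_ q1 q rfl ?_
        · intro i hi hilen
          have := hint (i+1) (by omega) (by simp; omega)
          simpa using this
        · rw [hq]
          have h2 : (hd :: T').length - n = (T'.length - n) + 1 := by simp; omega
          rw [h2]
          simp
      have := NSPath.cons hedge hns htail
      have hlbl : (hd :: T').drop n = (hd :: T')[n]'hnlt :: T'.drop n := by
        rw [List.drop_eq_getElem_cons hnlt]
        simp
      rwa [hlbl]
    · -- base case : length = n + 1
      have hlen : (hd :: T').length = n + 1 := le_antisymm hge hTlen
      have h1 : ((hd :: T').drop n).length = 1 := by simp [hlen]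
      obtain ⟨a, ha⟩ := List.length_eq_one_iff.mp h1
      have hpa : p.1 ++ [a] = hd :: T' := by
        rw [hp, ← ha, List.take_append_drop]
      have hedge : RauzyEdge F n p a q := by
        refine ⟨by rw [hpa]; exact hTF, hd, ?_⟩
        rw [hpa, hq]
        have : (hd :: T').length - n = 1 := by omega
        rw [this]
        simp
      have := NSPath.single hedge
      rwa [← ha] at this

end NSC
section Trace

open List

variable {A : Type*} [Fintype A]

/-- Context bundling the combinatorial facts needed for the suffix-trace analysis. -/
structure TraceCtx (F : Set (List A)) (n : ℕ) (x y v w s₀ w' : List A) : Prop where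
  hfac : Factorial F
  hxl : x.length = n
  hyl : y.length = n
  hxy : x ≠ y
  hsx : SpecialWord F x
  hsy : SpecialWord F y
  hv : x ++ v = s₀ ++ y
  hs₀ne : s₀ ≠ []
  hw : y ++ w = w' ++ y
  hw'ne : w' ≠ []
  midv : ∀ g c e, e ≠ [] → s₀ = g ++ c :: e →
    ¬SpecialWord F ((e ++ y).take n) ∧ (c :: (e ++ y)).take (n+1) ∈ F
  midw : ∀ g c e, e ≠ [] → w' = g ++ c :: e →
    ¬SpecialWord F ((e ++ y).take n) ∧ (c :: (e ++ y)).take (n+1) ∈ F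
  hLy : ∀ b, b :: y ∈ F → (∃ d, s₀ = d ++ [b]) ∨ (∃ d, w' = d ++ [b])
  hcl : ∀ p, p ∈ F → p.length = n → SpecialWord F p → p = x ∨ p = y

namespace TraceCtx

variable {F : Set (List A)} {n : ℕ} {x y v w s₀ w' : List A}

lemma hcomm (ctx : TraceCtx F n x y v w s₀ w') : ∀ c, wordPow w' c ++ y = y ++ wordPow w c := by
  intro c
  induction c with
  | zero => simp [wordPow_zero]
  | succ c ih =>
    rw [wordPow_succ, wordPow_succ, List.append_assoc, ih, ← List.append_assoc, ← ctx.hw]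
    simp

lemma vtxE (ctx : TraceCtx F n x y v w s₀ w') (e : List A) (c : ℕ) : ((e ++ wordPow w' c) ++ y).take n = (e ++ y).take n := by
  have h1 : n - (e ++ y).length = 0 := by simp [ctx.hyl]
  rw [List.append_assoc, ctx.hcomm, ← List.append_assoc, List.take_append, h1]
  simp

lemma vtxP (ctx : TraceCtx F n x y v w s₀ w') (c : ℕ) : ((wordPow w' c) ++ y).take n = y := by
  rw [ctx.hcomm, List.take_append, List.take_of_length_le ctx.hyl.le]
  simp [ctx.hyl]

lemma lpw (ctx : TraceCtx F n x y v w s₀ w') : ∀ (c : ℕ) (W : List A), W <:+ wordPow w' c →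
    (∃ c', W = wordPow w' c') ∨
    (∃ g d e, e ≠ [] ∧ w' = g ++ d :: e ∧ ∃ c', c' + 1 ≤ c ∧ W = e ++ wordPow w' c') := by
  intro c
  induction c with
  | zero =>
    intro W hW
    rw [wordPow_zero] at hW
    exact Or.inl ⟨0, List.suffix_nil.mp hW⟩
  | succ c ih =>
    intro W hW
    rw [wordPow_succ] at hW
    rcases Nat.lt_or_ge W.length (wordPow w' c).length.succ with hle | hge
    · have hWc : W <:+ wordPow w' c :=
        suffix_of_suffix_len_le hW (List.suffix_append _ _) (by omega)
      rcases ih W hWc with h | ⟨g, d, e, he, hgd, c', hc', hWe⟩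
      · exact Or.inl h
      · exact Or.inr ⟨g, d, e, he, hgd, c', by omega, hWe⟩
    · obtain ⟨e₀, he₀, hWe₀⟩ := suffix_append_split hW (by omega)
      rcases eq_or_ne e₀ [] with rfl | hne
      · exact Or.inl ⟨c, by simpa using hWe₀⟩
      rcases eq_or_ne e₀.length w'.length with hlen | hlen
      · have : e₀ = w' := he₀.eq_of_length hlen
        rw [this] at hWe₀
        exact Or.inl ⟨c+1, by rw [wordPow_succ]; exact hWe₀⟩
      · obtain ⟨g₀, hg₀⟩ := he₀
        have hg₀ne : g₀ ≠ [] := by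
          intro h0
          rw [h0] at hg₀
          exact hlen (by rw [← hg₀]; simp)
        rcases List.eq_nil_or_concat g₀ with h0 | ⟨g, d, hgd⟩
        · exact absurd h0 hg₀ne
        · refine Or.inr ⟨g, d, e₀, hne, ?_, c, le_refl _, hWe₀⟩
          rw [← hg₀, hgd]
          simp

lemma ls (ctx : TraceCtx F n x y v w s₀ w') (k : ℕ) (W : List A) (h : W <:+ s₀ ++ wordPow w' k) :
    (∃ c, W = wordPow w' c) ∨
    (∃ g d e, e ≠ [] ∧ w' = g ++ d :: e ∧ ∃ c, c + 1 ≤ k ∧ W = e ++ wordPow w' c) ∨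
    (∃ g d e, e ≠ [] ∧ s₀ = g ++ d :: e ∧ W = e ++ wordPow w' k) ∨
    W = s₀ ++ wordPow w' k := by
  rcases Nat.lt_or_ge W.length (wordPow w' k).length.succ with hle | hge
  · have hWc : W <:+ wordPow w' k :=
      suffix_of_suffix_len_le h (List.suffix_append _ _) (by omega)
    rcases ctx.lpw k W hWc with h' | h'
    · exact Or.inl h'
    · exact Or.inr (Or.inl h')
  · obtain ⟨e₀, he₀, hWe₀⟩ := suffix_append_split h (by omega)
    have hne : e₀ ≠ [] := by
      intro h0
      rw [h0] at hWe₀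
      simp at hWe₀
      rw [hWe₀] at hge
      omega
    rcases eq_or_ne e₀.length s₀.length with hlen | hlen
    · have : e₀ = s₀ := he₀.eq_of_length hlen
      rw [this] at hWe₀
      exact Or.inr (Or.inr (Or.inr hWe₀))
    · obtain ⟨g₀, hg₀⟩ := he₀
      have hg₀ne : g₀ ≠ [] := by
        intro h0
        rw [h0] at hg₀
        exact hlen (by rw [← hg₀]; simp)
      rcases List.eq_nil_or_concat g₀ with h0 | ⟨g, d, hgd⟩
      · exact absurd h0 hg₀ne
      · refine Or.inr (Or.inr (Or.inl ⟨g, d, e₀, hne, ?_, hWe₀⟩))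
        rw [← hg₀, hgd]
        simp

lemma l1 (ctx : TraceCtx F n x y v w s₀ w') (k : ℕ) (W : List A) (h : W <:+ s₀ ++ wordPow w' k)
    (hvx : (W ++ y).take n = x) : W = s₀ ++ wordPow w' k := by
  rcases ctx.ls k W h with ⟨c, rfl⟩ | ⟨g, d, e, he, hgd, c, hc, rfl⟩ | ⟨g, d, e, he, hgd, rfl⟩ | h4
  · rw [ctx.vtxP] at hvx
    exact absurd hvx.symm ctx.hxy
  · rw [ctx.vtxE] at hvx
    exact absurd (hvx ▸ (ctx.midw g d e he hgd).1) (fun h => h ctx.hsx)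
  · rw [ctx.vtxE] at hvx
    exact absurd (hvx ▸ (ctx.midv g d e he hgd).1) (fun h => h ctx.hsx)
  · exact h4

lemma l2 (ctx : TraceCtx F n x y v w s₀ w') (k : ℕ) (W : List A) (h : W <:+ s₀ ++ wordPow w' k)
    (hvy : (W ++ y).take n = y) : ∃ c, W = wordPow w' c := by
  rcases ctx.ls k W h with ⟨c, rfl⟩ | ⟨g, d, e, he, hgd, c, hc, rfl⟩ | ⟨g, d, e, he, hgd, rfl⟩ | h4
  · exact ⟨c, rfl⟩
  · rw [ctx.vtxE] at hvy
    exact absurd (hvy ▸ (ctx.midw g d e he hgd).1) (fun h => h ctx.hsy)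
  · rw [ctx.vtxE] at hvy
    exact absurd (hvy ▸ (ctx.midv g d e he hgd).1) (fun h => h ctx.hsy)
  · exfalso
    rw [h4] at hvy
    rw [ctx.vtxE s₀ k] at hvy
    rw [← ctx.hv] at hvy
    rw [List.take_append, List.take_of_length_le ctx.hxl.le] at hvy
    simp [ctx.hxl] at hvy
    exact ctx.hxy hvy

lemma l3 (ctx : TraceCtx F n x y v w s₀ w') (k : ℕ) (W : List A) (h : W <:+ s₀ ++ wordPow w' k) (hne : W ≠ s₀ ++ wordPow w' k)
    (hnsp : ¬ SpecialWord F ((W ++ y).take n)) (a : A) (ha : a :: (W ++ y).take n ∈ F) :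
    a :: W <:+ s₀ ++ wordPow w' k := by
  rcases ctx.ls k W h with ⟨c, rfl⟩ | ⟨g, d, e, he, hgd, c, hc, rfl⟩ | ⟨g, d, e, he, hgd, rfl⟩ | h4
  · exact absurd (ctx.vtxP c ▸ hnsp) (fun h => h ctx.hsy)
  · obtain ⟨hnsp2, hwin⟩ := ctx.midw g d e he hgd
    rw [List.take_succ_cons] at hwin
    have had : a = d := left_det (by rw [ctx.vtxE] at hnsp; exact hnsp)
      (by rw [ctx.vtxE e c] at ha; exact ha) hwin
    subst had
    have h1 : a :: (e ++ wordPow w' c) <:+ wordPow w' (c + 1) := by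
      rw [wordPow_succ, hgd]
      exact ⟨g, by simp⟩
    exact h1.trans ((wordPow_suffix w' hc).trans (List.suffix_append _ _))
  · obtain ⟨hnsp2, hwin⟩ := ctx.midv g d e he hgd
    rw [List.take_succ_cons] at hwin
    have had : a = d := left_det (by rw [ctx.vtxE] at hnsp; exact hnsp)
      (by rw [ctx.vtxE e k] at ha; exact ha) hwin
    subst had
    rw [hgd]
    exact ⟨g, by simp⟩
  · exact absurd h4 hne

lemma trace (ctx : TraceCtx F n x y v w s₀ w') : ∀ W : List A, W ++ y ∈ F →
    (∃ k, s₀ ++ wordPow w' k <:+ W) ∨ (∃ k, W <:+ s₀ ++ wordPow w' k) := by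
  intro W
  induction W with
  | nil => exact fun _ => Or.inr ⟨0, List.nil_suffix⟩
  | cons a W' ih =>
    intro hF
    have hF' : W' ++ y ∈ F := ctx.hfac hF (by
      have : W' ++ y <:+ (a :: W') ++ y := by
        refine suffix_append_right ?_
        exact List.suffix_cons a W'
      exact this.isInfix)
    rcases ih hF' with ⟨k, hk⟩ | ⟨k, hk⟩
    · exact Or.inl ⟨k, hk.trans (List.suffix_cons a W')⟩
    by_cases heq : W' = s₀ ++ wordPow w' k
    · exact Or.inl ⟨k, by rw [heq]; exact List.suffix_cons a _⟩
    have hpF : (W' ++ y).take n ∈ F := ctx.hfac hF' (((W' ++ y).take_prefix n).isInfix)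
    have hplen : ((W' ++ y).take n).length = n := by
      simp [ctx.hyl]
    have hap : a :: (W' ++ y).take n ∈ F := by
      have h1 : (a :: (W' ++ y)).take (n+1) ∈ F := by
        refine ctx.hfac hF ?_
        have h2 : (a :: (W' ++ y)).take (n+1) <+: a :: (W' ++ y) := List.take_prefix _ _
        have h3 : a :: (W' ++ y) = (a :: W') ++ y := by simp
        rw [h3] at h2
        exact h2.isInfix
      rw [List.take_succ_cons] at h1
      exact h1
    by_cases hsp : SpecialWord F ((W' ++ y).take n)
    · rcases ctx.hcl _ hpF hplen hsp with hpx | hpy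
      · exact absurd (ctx.l1 k W' hk hpx) heq
      · obtain ⟨c, rfl⟩ := ctx.l2 k W' hk hpy
        rw [hpy] at hap
        rcases ctx.hLy a hap with ⟨d, hd⟩ | ⟨d, hd⟩
        · refine Or.inr ⟨c, ⟨d, ?_⟩⟩
          rw [hd]
          simp
        · refine Or.inr ⟨c + 1, ⟨s₀ ++ d, ?_⟩⟩
          rw [wordPow_succ, hd]
          simp
    · exact Or.inr ⟨k, ctx.l3 k W' hk heq hsp a hap⟩

end TraceCtx

end Trace
section Rec

open List

variable {A : Type*} {F : Set (List A)}

lemma rext (hre : ∀ w ∈ F, ∃ a : A, w ++ [a] ∈ F) :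
    ∀ (j : ℕ) (W), W ∈ F → ∃ e : List A, e.length = j ∧ W ++ e ∈ F := by
  intro j
  induction j with
  | zero => exact fun W hW => ⟨[], rfl, by simpa⟩
  | succ j ih =>
    intro W hW
    obtain ⟨e, hel, heF⟩ := ih W hW
    obtain ⟨a, ha⟩ := hre _ heF
    exact ⟨e ++ [a], by simp [hel], by simpa [List.append_assoc] using ha⟩

lemma lext (hfac : Factorial F) (hbe : ∀ w ∈ F, ∃ a b : A, a :: (w ++ [b]) ∈ F) :
    ∀ (j : ℕ) (W), W ∈ F → ∃ e : List A, e.length = j ∧ e ++ W ∈ F := by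
  intro j
  induction j with
  | zero => exact fun W hW => ⟨[], rfl, by simpa⟩
  | succ j ih =>
    intro W hW
    obtain ⟨e, hel, heF⟩ := ih W hW
    obtain ⟨a, b, hab⟩ := hbe _ heF
    refine ⟨a :: e, by simp [hel], ?_⟩
    have h1 : a :: (e ++ W) <+: a :: ((e ++ W) ++ [b]) := ⟨[b], by simp⟩
    exact hfac hab h1.isInfix

lemma rec_lemma (hfac : Factorial F) (hre : ∀ w ∈ F, ∃ a : A, w ++ [a] ∈ F)
    (hocc : ∀ u ∈ F, ∃ n ≥ 1, ∀ w ∈ F, w.length = n → u <:+: w) :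
    ∀ u ∈ F, ∀ W ∈ F, ∃ g, u ++ (g ++ W) ∈ F := by
  intro u hu W hW
  obtain ⟨N, hN1, hNocc⟩ := hocc W hW
  obtain ⟨e, hel, heF⟩ := rext hre N u hu
  have heF2 : e ∈ F := hfac heF (List.suffix_append u e).isInfix
  have hWe : W <:+: e := hNocc e heF2 hel
  obtain ⟨s', t', hst⟩ := hWe
  refine ⟨s', hfac heF ?_⟩
  refine List.IsPrefix.isInfix ⟨t', ?_⟩
  rw [← hst]
  simp
end Rec

/-- In the first infinite case, with `X = xvw^*` and `z = ywᵐ ∈ F`, the set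
`U = Xy⁻¹ ∩ Fz⁻¹` is an `Fz⁻¹`-maximal suffix code. -/
theorem maximal_suffix_code_infinite_case [Fintype A] (hcard : Fintype.card A = 3)
    (F : Set (List A)) (hUR : UniformlyRecurrent F) (hT : IsTreeSet F)
    (hAF : ∀ a : A, [a] ∈ F) (x : List A) (hx : x ∈ F) (hbi : Bispecial F x)
    (y : RauzyVertex F x.length) (u v w t : List A)
    (htype : FirstInfiniteType F x.length ⟨x, hx, rfl⟩ y u v w t)
    (m : ℕ) (hz : y.1 ++ wordPow w m ∈ F) :
    IsMaximalSuffixCodeIn {s : List A | s ++ (y.1 ++ wordPow w m) ∈ F}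
      ({s : List A | s ++ y.1 ∈ {xv : List A | ∃ k : ℕ, xv = x ++ v ++ wordPow w k}} ∩
        {s : List A | s ++ (y.1 ++ wordPow w m) ∈ F}) := by
  classical
  obtain ⟨hfac, hre, hocc⟩ := hUR
  obtain ⟨⟨hfac2, hbe⟩, htree⟩ := hT
  obtain ⟨hne, hsx, hsy, hclass, hiff⟩ := htype
  have hyl : y.1.length = x.length := y.2.2
  have hxy : x ≠ y.1 := fun h => hne (Subtype.ext h)
  have hn1 : 1 ≤ x.length := by
    rcases Nat.eq_zero_or_pos x.length with h0 | h1
    · exfalso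
      apply hxy
      have hx0 : x = [] := List.length_eq_zero_iff.mp h0
      have hy0 : y.1 = [] := List.length_eq_zero_iff.mp (by omega)
      exact hx0.trans hy0.symm
    · exact h1
  have pathv : NSPath F x.length ⟨x, hx, rfl⟩ y v :=
    (hiff ⟨x, hx, rfl⟩ y (Or.inl rfl) (Or.inr rfl) v).mpr (Or.inr (Or.inl ⟨rfl, rfl, rfl⟩))
  have pathw : NSPath F x.length y y w :=
    (hiff y y (Or.inr rfl) (Or.inr rfl) w).mpr (Or.inr (Or.inr (Or.inl ⟨rfl, rfl, rfl⟩)))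
  obtain ⟨s₀, hs₀l, hs₀⟩ := pathv.decomp
  obtain ⟨w', hw'l, hw'⟩ := pathw.decomp
  have vne : v ≠ [] := pathv.label_ne_nil
  have wne : w ≠ [] := pathw.label_ne_nil
  rw [show (⟨x, hx, rfl⟩ : RauzyVertex F x.length).1 = x from rfl] at hs₀
  have hs₀ne : s₀ ≠ [] := by
    intro h0
    apply vne
    rw [h0] at hs₀l
    exact List.eq_nil_of_length_eq_zero hs₀l.symm
  have hw'ne : w' ≠ [] := by
    intro h0
    apply wne
    rw [h0] at hw'l
    exact List.eq_nil_of_length_eq_zero hw'l.symm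
  have midv : ∀ g c e, e ≠ [] → s₀ = g ++ c :: e →
      ¬SpecialWord F ((e ++ y.1).take x.length) ∧
        (c :: (e ++ y.1)).take (x.length+1) ∈ F := by
    intro g c e he hdec
    refine pathv.mid hn1 g c e he ?_
    show x ++ v = _
    rw [hs₀, hdec]
    simp
  have midw : ∀ g c e, e ≠ [] → w' = g ++ c :: e →
      ¬SpecialWord F ((e ++ y.1).take x.length) ∧
        (c :: (e ++ y.1)).take (x.length+1) ∈ F := by
    intro g c e he hdec
    refine pathw.mid hn1 g c e he ?_
    rw [hw', hdec]
    simp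
  have hcl : ∀ p, p ∈ F → p.length = x.length → SpecialWord F p → p = x ∨ p = y.1 := by
    intro p hpF hpl hsp
    rcases hclass ⟨p, hpF, hpl⟩ hsp with h | h
    · exact Or.inl (congrArg Subtype.val h)
    · exact Or.inr (congrArg Subtype.val h)
  have hLy : ∀ b, b :: y.1 ∈ F → (∃ d, s₀ = d ++ [b]) ∨ (∃ d, w' = d ++ [b]) := by
    intro b hb
    obtain ⟨g, hg⟩ := rec_lemma hfac hre hocc x hx (b :: y.1) hb
    set M := x ++ (g ++ b :: y.1) with hM
    have hMF : M ∈ F := hg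
    have hMlen : M.length = x.length + g.length + (x.length + 1) := by
      simp [hM, hyl]
      omega
    set last := M.length - x.length with hlast
    set P : ℕ → Prop :=
      fun i => i < last ∧ SpecialWord F ((M.drop i).take x.length) with hP
    have hP0 : P 0 := by
      refine ⟨by omega, ?_⟩
      simp only [List.drop_zero]
      have hx1 : M.take x.length = x := by
        rw [hM]
        exact List.take_left' rfl
      rw [hx1]
      exact hsx
    set i0 := Nat.findGreatest P last with hi0
    have hPi0 : P i0 := Nat.findGreatest_spec (Nat.zero_le last) hP0
    set T := M.drop i0 with hT
    have hTF : T ∈ F := hfac hMF (List.drop_suffix i0 M).isInfix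
    have hTlen : T.length = M.length - i0 := List.length_drop
    have hi0lt : i0 < last := hPi0.1
    have hTge : x.length + 1 ≤ T.length := by omega
    have hint : ∀ i, 0 < i → i + x.length < T.length →
        ¬SpecialWord F ((T.drop i).take x.length) := by
      intro i hi hilen
      have hdd : T.drop i = M.drop (i + i0) := by rw [hT, List.drop_drop, Nat.add_comm]
      rw [hdd]
      have hgt : i0 < i + i0 := by omega
      have hle : i + i0 ≤ last := by omega
      have hng := Nat.findGreatest_is_greatest hgt hle
      intro hsp
      exact hng ⟨by omega, hsp⟩
    have hq : y.1 = T.drop (T.length - x.length) := by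
      have h1 : T.drop (T.length - x.length) = M.drop (M.length - x.length) := by
        rw [hT, List.drop_drop]
        congr 1
        have hdl : (M.drop i0).length = M.length - i0 := List.length_drop
        omega
      rw [h1]
      have hM2 : M = (x ++ g ++ [b]) ++ y.1 := by rw [hM]; simp
      rw [hM2, List.drop_left' (by simp; omega)]
    have hpvmem : T.take x.length ∈ F := hfac hTF ((T.take_prefix x.length).isInfix)
    have hpvlen : (T.take x.length).length = x.length := by simp; omega
    set pv : RauzyVertex F x.length := ⟨T.take x.length, hpvmem, hpvlen⟩ with hpv
    have hpath : NSPath F x.length pv y (T.drop x.length) :=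
      nsc hfac T hTF hTge hint pv y rfl hq
    have hspec : SpecialWord F pv.1 := hPi0.2
    have hby : b :: y.1 <:+ T := by
      have h1 : b :: y.1 <:+ M := ⟨x ++ g, by rw [hM]; simp⟩
      refine suffix_of_suffix_len_le h1 (List.drop_suffix i0 M) ?_
      simp [hyl]
      omega
    rcases hclass pv hspec with hpx | hpy
    · -- pv = x-vertex : label of the path must be v, T = x ++ v
      left
      have hlv : T.drop x.length = v := by
        have h2 := (hiff ⟨x, hx, rfl⟩ y (Or.inl rfl) (Or.inr rfl)
          (T.drop x.length)).mp (hpx ▸ hpath)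
        rcases h2 with ⟨_, hqq, _⟩ | ⟨_, _, hl⟩ | ⟨hpp, _, _⟩ | ⟨hpp, _, _⟩
        · exact absurd hqq.symm hne
        · exact hl
        · exact absurd hpp hne
        · exact absurd hpp hne
      have hTeq : T = x ++ v := by
        have h3 : T = T.take x.length ++ T.drop x.length :=
          (List.take_append_drop x.length T).symm
        rw [h3, hlv]
        congr 1
        exact congrArg Subtype.val hpx
      have h4 : (s₀.getLast hs₀ne :: y.1) <:+ T := by
        refine ⟨s₀.dropLast, ?_⟩
        rw [hTeq, hs₀]
        conv_rhs => rw [← List.dropLast_append_getLast hs₀ne]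
        simp
      have h5 : b :: y.1 = s₀.getLast hs₀ne :: y.1 := by
        rcases List.suffix_or_suffix_of_suffix hby h4 with h | h
        · exact h.eq_of_length (by simp)
        · exact (h.eq_of_length (by simp)).symm
      have hb5 : b = s₀.getLast hs₀ne := (List.cons_eq_cons.mp h5).1
      refine ⟨s₀.dropLast, ?_⟩
      rw [hb5]
      exact (List.dropLast_append_getLast hs₀ne).symm
    · -- pv = y : label of the path must be w, T = y ++ w
      right
      have hlw : T.drop x.length = w := by
        have h2 := (hiff y y (Or.inr rfl) (Or.inr rfl)
          (T.drop x.length)).mp (hpy ▸ hpath)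
        rcases h2 with ⟨hpp, _, _⟩ | ⟨hpp, _, _⟩ | ⟨_, _, hl⟩ | ⟨_, hqq, _⟩
        · exact absurd hpp.symm hne
        · exact absurd hpp.symm hne
        · exact hl
        · exact absurd hqq.symm hne
      have hTeq : T = y.1 ++ w := by
        have h3 : T = T.take x.length ++ T.drop x.length :=
          (List.take_append_drop x.length T).symm
        rw [h3, hlw]
        congr 1
        exact congrArg Subtype.val hpy
      have h4 : (w'.getLast hw'ne :: y.1) <:+ T := by
        refine ⟨w'.dropLast, ?_⟩
        rw [hTeq, hw']
        conv_rhs => rw [← List.dropLast_append_getLast hw'ne]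
        simp
      have h5 : b :: y.1 = w'.getLast hw'ne :: y.1 := by
        rcases List.suffix_or_suffix_of_suffix hby h4 with h | h
        · exact h.eq_of_length (by simp)
        · exact (h.eq_of_length (by simp)).symm
      have hb5 : b = w'.getLast hw'ne := (List.cons_eq_cons.mp h5).1
      refine ⟨w'.dropLast, ?_⟩
      rw [hb5]
      exact (List.dropLast_append_getLast hw'ne).symm
  have ctx : TraceCtx F x.length x y.1 v w s₀ w' :=
    ⟨hfac, rfl, hyl, hxy, hsx, hsy, hs₀, hs₀ne, hw', hw'ne, midv, midw, hLy, hcl⟩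
  have hZ : ∀ k, x ++ v ++ wordPow w k = (s₀ ++ wordPow w' k) ++ y.1 := by
    intro k
    calc x ++ v ++ wordPow w k = (s₀ ++ y.1) ++ wordPow w k := by rw [hs₀]
    _ = s₀ ++ (y.1 ++ wordPow w k) := by simp
    _ = s₀ ++ (wordPow w' k ++ y.1) := by rw [ctx.hcomm k]
    _ = (s₀ ++ wordPow w' k) ++ y.1 := by simp
  refine ⟨⟨?_, ?_⟩, fun s hs => hs.2, ?_⟩
  · -- nonemptiness of code elements
    intro s hs
    obtain ⟨⟨k, hk⟩, -⟩ := hs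
    have hsk : s = s₀ ++ wordPow w' k := List.append_cancel_right (hk.trans (hZ k))
    rw [hsk]
    simp [hs₀ne]
  · -- suffix code property
    intro s1 hs1 s2 hs2 hsuf
    obtain ⟨⟨k, hk⟩, -⟩ := hs1
    obtain ⟨⟨j, hj⟩, -⟩ := hs2
    have hsk : s1 = s₀ ++ wordPow w' k := List.append_cancel_right (hk.trans (hZ k))
    have hsj : s2 = s₀ ++ wordPow w' j := List.append_cancel_right (hj.trans (hZ j))
    rw [hsk, hsj] at hsuf ⊢
    refine ctx.l1 j _ hsuf ?_
    rw [ctx.vtxE s₀ k, ← hs₀]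
    exact List.take_left' rfl
  · -- maximality
    intro W hWc hWs hUW
    refine Set.Subset.antisymm hUW ?_
    intro s hsW
    have hsne : s ≠ [] := hWc.1 s hsW
    have hsz : s ++ (y.1 ++ wordPow w m) ∈ F := hWs hsW
    obtain ⟨N, hN1, hNocc⟩ := hocc x hx
    obtain ⟨e, hel, heF⟩ := lext hfac hbe N _ hsz
    have hesz : (e ++ s) ++ (y.1 ++ wordPow w m) ∈ F := by
      rw [List.append_assoc]
      exact heF
    have hesy : (e ++ s) ++ y.1 ∈ F := by
      refine hfac hesz ?_
      refine List.IsPrefix.isInfix ⟨wordPow w m, ?_⟩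
      simp
    have key : ∃ k, s₀ ++ wordPow w' k <:+ e ++ s := by
      rcases ctx.trace (e ++ s) hesy with ⟨k, hk⟩ | ⟨k, hk⟩
      · exact ⟨k, hk⟩
      · have heF2 : e ∈ F := hfac heF (List.prefix_append e _).isInfix
        obtain ⟨α, β, hαβ⟩ := hNocc e heF2 hel
        have hD : x ++ (β ++ s) <:+ e ++ s := ⟨α, by rw [← hαβ]; simp⟩
        have hDk : x ++ (β ++ s) <:+ s₀ ++ wordPow w' k := hD.trans hk
        have hDx : ((x ++ (β ++ s)) ++ y.1).take x.length = x := by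
          rw [List.append_assoc]
          exact List.take_left' rfl
        have hDeq := ctx.l1 k _ hDk hDx
        have hlen1 : (e ++ s).length ≤ (s₀ ++ wordPow w' k).length := hk.length_le
        have hlen2 : (s₀ ++ wordPow w' k).length ≤ (e ++ s).length := by
          rw [← hDeq]
          exact hD.length_le
        have heq : e ++ s = s₀ ++ wordPow w' k := hk.eq_of_length (le_antisymm hlen1 hlen2)
        exact ⟨k, heq ▸ List.suffix_rfl⟩
    obtain ⟨k, hk⟩ := key
    have hmem : (s₀ ++ wordPow w' k) ++ (y.1 ++ wordPow w m) ∈ F :=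
      hfac hesz (suffix_append_right hk).isInfix
    have hskU : s₀ ++ wordPow w' k ∈
        ({s : List A | s ++ y.1 ∈ {xv : List A | ∃ k : ℕ, xv = x ++ v ++ wordPow w k}} ∩
          {s : List A | s ++ (y.1 ++ wordPow w m) ∈ F}) := ⟨⟨k, (hZ k).symm⟩, hmem⟩
    have hskW := hUW hskU
    rcases List.suffix_or_suffix_of_suffix (List.suffix_append e s) hk with h | h
    · rw [hWc.2 s hsW _ hskW h]
      exact hskU
    · rw [← hWc.2 _ hskW s hsW h]
      exact hskU
end

section
/- Let G be a directed graph with edges labeled by letters of A, let v be a vertex of G, and let (p, a, v) and (q, a, v) be two distinct edges of G entering v with the same label a. Let G′ be the graph obtained from G by the Stallings folding identifying the vertices p and q and identifying these two edges. Then for every vertex v₀ of G, the group defined by G′ with respect to the image of v₀ equals the group defined by G with respect to v₀, as subgroups of the free group on A. -/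
open List

variable {A : Type*}

section StallingsAux

variable {B W : Type*} {E : W → B → W → Prop}

private lemma GenPathLabel.congr_label {x y : W} {g g' : FreeGroup B}
    (h : GenPathLabel E x y g) (hg : g = g') : GenPathLabel E x y g' := hg ▸ h

private lemma GenPathLabel.concat {x y z : W} {g h : FreeGroup B}
    (h1 : GenPathLabel E x y g) (h2 : GenPathLabel E y z h) :
    GenPathLabel E x z (g * h) := by
  induction h2 with
  | nil => exact h1.congr_label (mul_one g).symm
  | fwd h' e ih => exact (ih.fwd e).congr_label (mul_assoc ..)
  | bwd h' e ih => exact (ih.bwd e).congr_label (mul_assoc ..)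

private lemma GenPathLabel.inv {x y : W} {g : FreeGroup B}
    (h : GenPathLabel E x y g) : GenPathLabel E y x g⁻¹ := by
  induction h with
  | nil => exact (GenPathLabel.nil _).congr_label inv_one.symm
  | fwd h' e ih =>
      exact ((((GenPathLabel.nil _).bwd e)).concat ih).congr_label (by group)
  | bwd h' e ih =>
      exact ((((GenPathLabel.nil _).fwd e)).concat ih).congr_label (by group)

private lemma conn_of_rel {r : W → W → Prop}
    (hr : ∀ s u : W, r s u → GenPathLabel E s u 1) {s u : W}
    (h : Quot.mk r s = Quot.mk r u) : GenPathLabel E s u 1 := by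
  have h' := Quot.eq.mp h
  clear h
  induction h' with
  | rel x y hxy => exact hr _ _ hxy
  | refl x => exact .nil x
  | symm x y _ ih => exact ih.inv.congr_label inv_one
  | trans x y z _ _ ih1 ih2 => exact (ih1.concat ih2).congr_label (one_mul 1)

private lemma unfold_quot {r : W → W → Prop}
    (hr : ∀ s u : W, r s u → GenPathLabel E s u 1) {X Y : Quot r} {g : FreeGroup B}
    (h : GenPathLabel
      (fun X b Y => ∃ s u : W, Quot.mk r s = X ∧ Quot.mk r u = Y ∧ E s b u) X Y g)
    {x y : W} (hx : Quot.mk r x = X) (hy : Quot.mk r y = Y) : GenPathLabel E x y g := by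
  induction h generalizing x y with
  | nil => exact conn_of_rel hr (hx.trans hy.symm)
  | fwd h' e ih =>
      obtain ⟨s, u, hs, hu, he⟩ := e
      exact (((ih hx hs).fwd he).concat
        (conn_of_rel hr (hu.trans hy.symm))).congr_label (mul_one _)
  | bwd h' e ih =>
      obtain ⟨s, u, hs, hu, he⟩ := e
      exact (((ih hx hu).bwd he).concat
        (conn_of_rel hr (hs.trans hy.symm))).congr_label (mul_one _)

private lemma to_quot {r : W → W → Prop} {x y : W} {g : FreeGroup B}
    (h : GenPathLabel E x y g) :
    GenPathLabel
      (fun X b Y => ∃ s u : W, Quot.mk r s = X ∧ Quot.mk r u = Y ∧ E s b u)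
      (Quot.mk r x) (Quot.mk r y) g := by
  induction h with
  | nil => exact .nil _
  | fwd h' e ih => exact ih.fwd ⟨_, _, rfl, rfl, e⟩
  | bwd h' e ih => exact ih.bwd ⟨_, _, rfl, rfl, e⟩

end StallingsAux

/-- A Stallings folding does not modify the group defined by a labeled graph: if
`(p, a, vv)` and `(q, a, vv)` are two distinct edges entering `vv` with the same label
`a`, identifying `p` with `q` (and the two edges) yields a graph defining the same
subgroup of the free group with respect to (the image of) any vertex `v₀`. -/
theorem stallings_folding_pathGroup {A V : Type*} (E : V → A → V → Prop)
    (p q vv : V) (a : A) (hpq : p ≠ q) (hp : E p a vv) (hq : E q a vv) (v₀ : V) :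
    {g : FreeGroup A | GenPathLabel E v₀ v₀ g} =
      {g : FreeGroup A |
        GenPathLabel
          (fun (X : Quot (fun s u : V => s = p ∧ u = q)) (b : A)
               (Y : Quot (fun s u : V => s = p ∧ u = q)) =>
            ∃ s u : V, Quot.mk _ s = X ∧ Quot.mk _ u = Y ∧ E s b u)
          (Quot.mk _ v₀) (Quot.mk _ v₀) g} := by
  ext g
  simp only [Set.mem_setOf_eq]
  constructor
  · intro h
    exact to_quot h
  · intro h
    refine unfold_quot ?_ h rfl rfl
    rintro s u ⟨rfl, rfl⟩
    exact (((GenPathLabel.nil s).fwd hp).bwd hq).congr_label (by group)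
end
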